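/- Second-derivative comparison between the continuous interpolant and the discrete second difference: let m = 2R+1 be odd, h = L/m, and let φ be the complex grid function determined by coefficients c : {−R,…,R}³ → ℂ via φ_{i,j,k} = Σ_{r,s,t=−R}^{R} c_{r,s,t} e^{2πi(r x_i + s y_j + t z_k)/L}. Then L³ Σ_{r,s,t=−R}^{R} (2π r / L)⁴ |c_{r,s,t}|² ≤ (π/2)⁴ · h³ Σ_{i,j,k=1}^{m} |(φ_{i+1,j,k} − 2φ_{i,j,k} + φ_{i−1,j,k})/h²|², where the indices i±1 are taken modulo m. -/

import Mathlib

open Finset Real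

/-- The grid point `x_i = (i - 1/2) h`. -/
noncomputable def xg (h : ℝ) (i : ℤ) : ℝ := ((i : ℝ) - 1 / 2) * h

/-- The complex grid function determined by Fourier coefficients `c` on `{-R,…,R}³`:
`φ_{i,j,k} = Σ_{r,s,t=-R}^{R} c_{r,s,t} e^{2πi(r x_i + s y_j + t z_k)/L}`
(as a function of the integer indices, it is automatically `m`-periodic, `m = 2R+1`). -/
noncomputable def fgrid (L h : ℝ) (R : ℕ) (c : ℤ × ℤ × ℤ → ℂ) (i j k : ℤ) : ℂ :=
  ∑ r ∈ Finset.Icc (-(R : ℤ)) (R : ℤ), ∑ s ∈ Finset.Icc (-(R : ℤ)) (R : ℤ),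
    ∑ t ∈ Finset.Icc (-(R : ℤ)) (R : ℤ),
      c (r, s, t) *
        Complex.exp (2 * (Real.pi : ℂ) * Complex.I *
          ((r * xg h i + s * xg h j + t * xg h k : ℝ) : ℂ) / (L : ℂ))

/-- The one-dimensional grid exponential. -/
noncomputable def Ez (m : ℕ) (r i : ℤ) : ℂ :=
  Complex.exp (2 * (Real.pi : ℂ) * Complex.I * ((r : ℂ) * ((i : ℂ) - 1 / 2)) / (m : ℂ))

lemma Ez_mul_conj (m : ℕ) (hm : 0 < m) (r r' i : ℤ) :
    Ez m r i * (starRingEnd ℂ) (Ez m r' i) = Ez m (r - r') i := by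
  have hm' : (m : ℂ) ≠ 0 := by exact_mod_cast hm.ne'
  rw [Ez, Ez, Ez, ← Complex.exp_conj, ← Complex.exp_add]
  congr 1
  rw [map_div₀]
  push_cast
  simp only [map_mul, map_sub, map_ofNat, Complex.conj_I, Complex.conj_ofReal,
    map_intCast, map_natCast, map_div₀, map_one]
  field_simp
  ring

lemma sum_Ez (m : ℕ) (hm : 0 < m) (d : ℤ) (hd : d ≠ 0) (hdm : d.natAbs < m) :
    ∑ i ∈ Finset.Icc (1 : ℤ) (m : ℤ), Ez m d i = 0 := by
  have hm' : (m : ℂ) ≠ 0 := by exact_mod_cast hm.ne'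
  set ω : ℂ := Complex.exp (2 * (Real.pi : ℂ) * Complex.I * d / m) with hω
  have hωne : ω ≠ 1 := by
    intro hcontra
    rw [hω, Complex.exp_eq_one_iff] at hcontra
    obtain ⟨k, hk⟩ := hcontra
    rw [div_eq_iff hm'] at hk
    have h2πI : (2 : ℂ) * Real.pi * Complex.I ≠ 0 := by
      simp [Real.pi_ne_zero, Complex.I_ne_zero]
    have hc : (d : ℂ) = (k : ℂ) * m := by
      apply mul_left_cancel₀ h2πI
      linear_combination hk
    have hdk : d = k * m := by exact_mod_cast hc
    rcases eq_or_ne k 0 with rfl | hk0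
    · simp at hdk; omega
    · have h1 : 1 ≤ k.natAbs := Int.natAbs_pos.mpr hk0
      have : d.natAbs = k.natAbs * m := by rw [hdk, Int.natAbs_mul, Int.natAbs_natCast]
      nlinarith
  have hωm : ω ^ (m : ℕ) = 1 := by
    rw [hω, ← Complex.exp_nat_mul]
    have : (m : ℂ) * (2 * (Real.pi : ℂ) * Complex.I * d / m)
        = (d : ℂ) * (2 * Real.pi * Complex.I) := by field_simp
    rw [this, Complex.exp_int_mul_two_pi_mul_I]
  have hinj : Function.Injective (fun j : ℕ => (j : ℤ) + 1) := fun a b hab => by simpa using hab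
  have hmap : Finset.Icc (1 : ℤ) (m : ℤ) =
      (Finset.range m).map ⟨fun j : ℕ => (j : ℤ) + 1, hinj⟩ := by
    ext x
    simp only [Finset.mem_Icc, Finset.mem_map, Finset.mem_range, Function.Embedding.coeFn_mk]
    constructor
    · rintro ⟨h1, h2⟩; exact ⟨(x - 1).toNat, by omega, by omega⟩
    · rintro ⟨j, hj, rfl⟩; omega
  have hEω : ∀ j : ℕ, Ez m d ((j : ℤ) + 1) = Complex.exp (Real.pi * Complex.I * d / m) * ω ^ j := by
    intro j
    rw [Ez, hω, ← Complex.exp_nat_mul, ← Complex.exp_add]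
    congr 1
    push_cast
    field_simp
    ring
  rw [hmap, Finset.sum_map]
  simp only [Function.Embedding.coeFn_mk, hEω]
  rw [← Finset.mul_sum, geom_sum_eq hωne, hωm]
  simp

lemma Ez_zero (m : ℕ) (i : ℤ) : Ez m 0 i = 1 := by simp [Ez]

lemma Ez_orth (R m : ℕ) (hm : m = 2 * R + 1) {r r' : ℤ}
    (hr : r ∈ Finset.Icc (-(R : ℤ)) (R : ℤ)) (hr' : r' ∈ Finset.Icc (-(R : ℤ)) (R : ℤ)) :
    ∑ i ∈ Finset.Icc (1 : ℤ) (m : ℤ), Ez m r i * (starRingEnd ℂ) (Ez m r' i)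
      = if r = r' then (m : ℂ) else 0 := by
  have hm0 : 0 < m := by omega
  simp only [Ez_mul_conj m hm0]
  rcases eq_or_ne r r' with rfl | hne
  · simp only [sub_self, Ez_zero, Finset.sum_const, if_pos rfl]
    rw [Int.card_Icc]
    norm_num
  · rw [if_neg hne, sum_Ez m hm0 _ (sub_ne_zero.mpr hne)]
    simp only [Finset.mem_Icc] at hr hr'
    omega

lemma parseval {ι κ : Type*} [DecidableEq ι] (A : Finset ι) (B : Finset κ)
    (f : ι → κ → ℂ) (a : ι → ℂ) (N : ℂ)
    (horth : ∀ p ∈ A, ∀ p' ∈ A,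
      ∑ q ∈ B, f p q * (starRingEnd ℂ) (f p' q) = if p = p' then N else 0) :
    ∑ q ∈ B, ((∑ p ∈ A, a p * f p q) * (starRingEnd ℂ) (∑ p ∈ A, a p * f p q))
      = N * ∑ p ∈ A, a p * (starRingEnd ℂ) (a p) := by
  have step1 : ∀ q ∈ B, (∑ p ∈ A, a p * f p q) * (starRingEnd ℂ) (∑ p ∈ A, a p * f p q)
      = ∑ p ∈ A, ∑ p' ∈ A,
          (a p * (starRingEnd ℂ) (a p')) * (f p q * (starRingEnd ℂ) (f p' q)) := by
    intro q _
    rw [map_sum, Finset.sum_mul_sum]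
    apply Finset.sum_congr rfl; intro p _
    apply Finset.sum_congr rfl; intro p' _
    rw [map_mul]; ring
  rw [Finset.sum_congr rfl step1, Finset.sum_comm]
  have step2 : ∀ p ∈ A, ∑ q ∈ B, ∑ p' ∈ A,
      (a p * (starRingEnd ℂ) (a p')) * (f p q * (starRingEnd ℂ) (f p' q))
      = N * (a p * (starRingEnd ℂ) (a p)) := by
    intro p hp
    rw [Finset.sum_comm]
    have : ∀ p' ∈ A, ∑ q ∈ B,
        (a p * (starRingEnd ℂ) (a p')) * (f p q * (starRingEnd ℂ) (f p' q))
        = (a p * (starRingEnd ℂ) (a p')) * (if p = p' then N else 0) := by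
      intro p' hp'
      rw [← Finset.mul_sum, horth p hp p' hp']
    rw [Finset.sum_congr rfl this]
    simp only [mul_ite, mul_zero]
    rw [Finset.sum_ite_eq A p (fun p' => a p * (starRingEnd ℂ) (a p') * N), if_pos hp]
    ring
  rw [Finset.sum_congr rfl step2, ← Finset.mul_sum]

lemma key_sin (R m : ℕ) (hm : m = 2 * R + 1) (r : ℤ) (hr : r.natAbs ≤ R) :
    16 * (r : ℝ) ^ 4 ≤ (m : ℝ) ^ 4 * Real.sin (Real.pi * r / m) ^ 4 := by
  have hm0 : (0 : ℝ) < m := by exact_mod_cast Nat.pos_of_ne_zero (by omega)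
  have habs : |(r : ℝ)| ≤ R := by
    have h1 : -(R:ℤ) ≤ r := by omega
    have h2 : r ≤ (R:ℤ) := by omega
    rw [abs_le]
    constructor
    · exact_mod_cast h1
    · exact_mod_cast h2
  have hx0 : 0 ≤ Real.pi * |(r : ℝ)| / m := by positivity
  have hx1 : Real.pi * |(r : ℝ)| / m ≤ Real.pi / 2 := by
    rw [div_le_div_iff₀ hm0 two_pos]
    have : 2 * |(r:ℝ)| ≤ m := by
      have : (m : ℝ) = 2 * R + 1 := by push_cast [hm]; ring
      linarith
    nlinarith [Real.pi_pos]
  have hsin := Real.mul_le_sin hx0 hx1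
  have hsin' : 2 * |(r : ℝ)| / m ≤ Real.sin (Real.pi * |(r : ℝ)| / m) := by
    have hπ : Real.pi ≠ 0 := Real.pi_ne_zero
    calc 2 * |(r : ℝ)| / m = 2 / Real.pi * (Real.pi * |(r : ℝ)| / m) := by field_simp
    _ ≤ _ := hsin
  have hsq : Real.sin (Real.pi * r / m) ^ 4 = Real.sin (Real.pi * |(r : ℝ)| / m) ^ 4 := by
    rcases abs_cases (r : ℝ) with ⟨he, _⟩ | ⟨he, _⟩
    · rw [he]
    · rw [he, show Real.pi * -(r:ℝ) / m = -(Real.pi * (r:ℝ) / m) by ring, Real.sin_neg]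
      ring
  rw [hsq]
  have h4 := pow_le_pow_left₀ (by positivity) hsin' 4
  have habs4 : |(r : ℝ)| ^ 4 = (r : ℝ) ^ 4 := by
    rw [← abs_pow, abs_of_nonneg (by positivity)]
  have hm4 : (0:ℝ) < (m:ℝ)^4 := by positivity
  rw [div_pow] at h4
  calc 16 * (r:ℝ)^4 = (2 * |(r:ℝ)|)^4 / (m:ℝ)^4 * (m:ℝ)^4 := by
        rw [div_mul_cancel₀ _ hm4.ne']; rw [mul_pow, ← habs4]; ring
  _ ≤ Real.sin (Real.pi * |(r : ℝ)| / m) ^ 4 * (m:ℝ)^4 :=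
        mul_le_mul_of_nonneg_right h4 hm4.le
  _ = _ := by ring

lemma fgrid_eq (L h : ℝ) (hL : 0 < L) (R m : ℕ) (hm0 : 0 < m) (hh : h = L / m)
    (c : ℤ × ℤ × ℤ → ℂ) (i j k : ℤ) :
    fgrid L h R c i j k = ∑ r ∈ Finset.Icc (-(R : ℤ)) (R : ℤ),
      ∑ s ∈ Finset.Icc (-(R : ℤ)) (R : ℤ), ∑ t ∈ Finset.Icc (-(R : ℤ)) (R : ℤ),
        c (r, s, t) * (Ez m r i * Ez m s j * Ez m t k) := by
  have hL' : (L : ℂ) ≠ 0 := by exact_mod_cast hL.ne'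
  have hm' : (m : ℂ) ≠ 0 := by exact_mod_cast (Nat.cast_pos.mpr hm0).ne'
  unfold fgrid
  refine Finset.sum_congr rfl fun r _ => Finset.sum_congr rfl fun s _ =>
    Finset.sum_congr rfl fun t _ => ?_
  congr 1
  rw [Ez, Ez, Ez, ← Complex.exp_add, ← Complex.exp_add]
  congr 1
  simp only [xg]
  push_cast [hh]
  field_simp

lemma Ez_shift (m : ℕ) (hm0 : 0 < m) (r i : ℤ) (e : ℤ) :
    Ez m r (i + e) = Ez m r i * Complex.exp (2 * (Real.pi : ℂ) * Complex.I * r * e / m) := by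
  have hm' : (m : ℂ) ≠ 0 := by exact_mod_cast (Nat.cast_pos.mpr hm0).ne'
  rw [Ez, Ez, ← Complex.exp_add]
  congr 1
  push_cast
  field_simp
  ring

lemma exp_add_exp_neg (θ : ℝ) :
    Complex.exp ((θ : ℂ) * Complex.I) + Complex.exp (-(θ : ℂ) * Complex.I)
      = 2 * ((Real.cos θ : ℝ) : ℂ) := by
  rw [Complex.exp_mul_I, Complex.exp_mul_I, Complex.ofReal_cos]
  simp [Complex.cos_neg, Complex.sin_neg]
  ring

lemma fgrid_diff (L h : ℝ) (hL : 0 < L) (R m : ℕ) (hm0 : 0 < m) (hh : h = L / m)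
    (c : ℤ × ℤ × ℤ → ℂ) (i j k : ℤ) :
    fgrid L h R c (i + 1) j k - 2 * fgrid L h R c i j k + fgrid L h R c (i - 1) j k
      = ∑ r ∈ Finset.Icc (-(R : ℤ)) (R : ℤ), ∑ s ∈ Finset.Icc (-(R : ℤ)) (R : ℤ),
          ∑ t ∈ Finset.Icc (-(R : ℤ)) (R : ℤ),
            (c (r, s, t) * (((2 * Real.cos (2 * Real.pi * r / m) - 2 : ℝ)) : ℂ)) *
              (Ez m r i * Ez m s j * Ez m t k) := by
  have hm' : (m : ℂ) ≠ 0 := by exact_mod_cast (Nat.cast_pos.mpr hm0).ne'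
  rw [fgrid_eq L h hL R m hm0 hh, fgrid_eq L h hL R m hm0 hh, fgrid_eq L h hL R m hm0 hh,
    Finset.mul_sum, ← Finset.sum_sub_distrib, ← Finset.sum_add_distrib]
  refine Finset.sum_congr rfl fun r _ => ?_
  rw [Finset.mul_sum, ← Finset.sum_sub_distrib, ← Finset.sum_add_distrib]
  refine Finset.sum_congr rfl fun s _ => ?_
  rw [Finset.mul_sum, ← Finset.sum_sub_distrib, ← Finset.sum_add_distrib]
  refine Finset.sum_congr rfl fun t _ => ?_
  rw [show i - 1 = i + (-1) by ring, Ez_shift m hm0 r i 1, Ez_shift m hm0 r i (-1)]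
  have key := exp_add_exp_neg (2 * Real.pi * r / m)
  have e1 : ((2 * Real.pi * r / m : ℝ) : ℂ) * Complex.I
      = 2 * (Real.pi : ℂ) * Complex.I * r * ((1 : ℤ) : ℂ) / m := by push_cast; ring
  have e2 : -((2 * Real.pi * r / m : ℝ) : ℂ) * Complex.I
      = 2 * (Real.pi : ℂ) * Complex.I * r * ((-1 : ℤ) : ℂ) / m := by push_cast; ring
  rw [e1, e2] at key
  push_cast at key ⊢
  linear_combination (c (r, s, t) * Ez m r i * Ez m s j * Ez m t k) * key

/-- Second-derivative comparison between the continuous interpolant and the discrete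
second difference. -/
theorem stmt14 (L : ℝ) (hL : 0 < L) (R : ℕ) (m : ℕ) (hm : m = 2 * R + 1)
    (h : ℝ) (hh : h = L / m) (c : ℤ × ℤ × ℤ → ℂ)
    (Φ : ℤ → ℤ → ℤ → ℂ) (hΦ : Φ = fgrid L h R c) :
    L ^ 3 * ∑ r ∈ Finset.Icc (-(R : ℤ)) (R : ℤ), ∑ s ∈ Finset.Icc (-(R : ℤ)) (R : ℤ),
        ∑ t ∈ Finset.Icc (-(R : ℤ)) (R : ℤ),
          (2 * Real.pi * r / L) ^ 4 * ‖c (r, s, t)‖ ^ 2 ≤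
      (Real.pi / 2) ^ 4 *
        (h ^ 3 * ∑ i ∈ Finset.Icc (1 : ℤ) (m : ℤ), ∑ j ∈ Finset.Icc (1 : ℤ) (m : ℤ),
          ∑ k ∈ Finset.Icc (1 : ℤ) (m : ℤ),
            ‖(Φ (i + 1) j k - 2 * Φ i j k + Φ (i - 1) j k) / (h : ℂ) ^ 2‖ ^ 2) := by
  subst hΦ
  have hm0 : 0 < m := by omega
  have hmR : (0 : ℝ) < m := by exact_mod_cast hm0
  have hpos : 0 < h := by rw [hh]; positivity
  set S := Finset.Icc (-(R : ℤ)) (R : ℤ) with hS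
  set II := Finset.Icc (1 : ℤ) (m : ℤ) with hII
  set μ : ℤ → ℝ := fun r => 2 * Real.cos (2 * Real.pi * r / m) - 2 with hμdef
  set a : ℤ × ℤ × ℤ → ℂ := fun p => c p * ((μ p.1 : ℝ) : ℂ) with hadef
  set f : ℤ × ℤ × ℤ → ℤ × ℤ × ℤ → ℂ :=
    fun p q => Ez m p.1 q.1 * Ez m p.2.1 q.2.1 * Ez m p.2.2 q.2.2 with hfdef
  -- triple orthogonality
  have orth3 : ∀ p ∈ S ×ˢ S ×ˢ S, ∀ p' ∈ S ×ˢ S ×ˢ S,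
      ∑ q ∈ II ×ˢ II ×ˢ II, f p q * (starRingEnd ℂ) (f p' q)
        = if p = p' then ((m : ℂ)) ^ 3 else 0 := by
    rintro ⟨r, s, t⟩ hp ⟨r', s', t'⟩ hp'
    simp only [Finset.mem_product] at hp hp'
    obtain ⟨hr, hs, ht⟩ := hp
    obtain ⟨hr', hs', ht'⟩ := hp'
    simp only [Finset.sum_product]
    have h1 : ∀ i j k : ℤ, f (r, s, t) (i, j, k) * (starRingEnd ℂ) (f (r', s', t') (i, j, k))
        = (Ez m r i * (starRingEnd ℂ) (Ez m r' i)) *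
          ((Ez m s j * (starRingEnd ℂ) (Ez m s' j)) *
           (Ez m t k * (starRingEnd ℂ) (Ez m t' k))) := by
      intro i j k
      simp only [hfdef, map_mul]
      ring
    simp only [h1]
    have h2 : ∀ i : ℤ, ∑ j ∈ II, ∑ k ∈ II,
        (Ez m r i * (starRingEnd ℂ) (Ez m r' i)) *
          ((Ez m s j * (starRingEnd ℂ) (Ez m s' j)) *
           (Ez m t k * (starRingEnd ℂ) (Ez m t' k)))
        = (Ez m r i * (starRingEnd ℂ) (Ez m r' i)) *
          ((∑ j ∈ II, Ez m s j * (starRingEnd ℂ) (Ez m s' j)) *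
           (∑ k ∈ II, Ez m t k * (starRingEnd ℂ) (Ez m t' k))) := by
      intro i
      rw [Finset.sum_mul_sum, Finset.mul_sum]
      refine Finset.sum_congr rfl fun j _ => ?_
      rw [Finset.mul_sum]
    simp only [h2]
    rw [← Finset.sum_mul]
    rw [Ez_orth R m hm hr hr', Ez_orth R m hm hs hs', Ez_orth R m hm ht ht']
    rcases eq_or_ne r r' with rfl | h1
    · rcases eq_or_ne s s' with rfl | h2
      · rcases eq_or_ne t t' with rfl | h3
        · simp; ring
        · simp [h3, Prod.ext_iff]
      · simp [h2, Prod.ext_iff]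
    · simp [h1, Prod.ext_iff]
  -- Parseval (real form)
  have P : ∑ q ∈ II ×ˢ II ×ˢ II, Complex.normSq (∑ p ∈ S ×ˢ S ×ˢ S, a p * f p q)
      = (m : ℝ) ^ 3 * ∑ p ∈ S ×ˢ S ×ˢ S, Complex.normSq (a p) := by
    have hP := parseval (S ×ˢ S ×ˢ S) (II ×ˢ II ×ˢ II) f a ((m : ℂ) ^ 3) orth3
    simp only [Complex.mul_conj] at hP
    exact_mod_cast hP
  -- identify the discrete second difference
  have hD : ∀ i j k : ℤ,
      fgrid L h R c (i + 1) j k - 2 * fgrid L h R c i j k + fgrid L h R c (i - 1) j k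
        = ∑ p ∈ S ×ˢ S ×ˢ S, a p * f p (i, j, k) := by
    intro i j k
    rw [fgrid_diff L h hL R m hm0 hh c i j k]
    simp only [Finset.sum_product]
    rfl
  -- pointwise rewrite of the RHS summand
  have habs : ∀ z : ℂ, ‖z / (h : ℂ) ^ 2‖ ^ 2 = Complex.normSq z / h ^ 4 := by
    intro z
    rw [norm_div, div_pow, Complex.sq_norm, norm_pow, Complex.norm_real, Real.norm_of_nonneg hpos.le,
      ← pow_mul]
  -- rewrite RHS triple sum
  have hRHS : ∑ i ∈ II, ∑ j ∈ II, ∑ k ∈ II,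
      ‖(fgrid L h R c (i + 1) j k - 2 * fgrid L h R c i j k
        + fgrid L h R c (i - 1) j k) / (h : ℂ) ^ 2‖ ^ 2
      = ((m : ℝ) ^ 3 * ∑ p ∈ S ×ˢ S ×ˢ S, Complex.normSq (a p)) / h ^ 4 := by
    rw [← P]
    simp only [Finset.sum_product, Finset.sum_div]
    refine Finset.sum_congr rfl fun i _ => Finset.sum_congr rfl fun j _ =>
      Finset.sum_congr rfl fun k _ => ?_
    rw [habs, hD]
    simp only [Finset.sum_product]
  rw [hRHS]
  -- now a purely real comparison
  have hnormSq_a : ∀ p : ℤ × ℤ × ℤ, Complex.normSq (a p)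
      = Complex.normSq (c p) * (μ p.1 * μ p.1) := by
    intro p
    simp only [hadef, Complex.normSq_mul, Complex.normSq_ofReal]
    try ring
  -- expand product sum into nested sums
  have hsum : ∑ p ∈ S ×ˢ S ×ˢ S, Complex.normSq (a p)
      = ∑ r ∈ S, ∑ s ∈ S, ∑ t ∈ S, Complex.normSq (c (r, s, t)) * (μ r * μ r) := by
    rw [Finset.sum_product]
    refine Finset.sum_congr rfl fun r _ => ?_
    rw [Finset.sum_product]
    refine Finset.sum_congr rfl fun s _ => Finset.sum_congr rfl fun t _ => hnormSq_a _
  rw [hsum]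
  simp only [Complex.sq_norm]
  -- reduce to a termwise inequality
  have base : ∀ r : ℤ, r ∈ S → L ^ 3 * (2 * Real.pi * r / L) ^ 4
      ≤ (Real.pi / 2) ^ 4 * (h ^ 3 * ((m : ℝ) ^ 3 * (μ r * μ r) / h ^ 4)) := by
    intro r hr
    have hrabs : r.natAbs ≤ R := by
      rw [hS, Finset.mem_Icc] at hr; omega
    have hk := key_sin R m hm r hrabs
    have hμr : μ r = -4 * Real.sin (Real.pi * r / m) ^ 2 := by
      have h1 := Real.cos_two_mul (Real.pi * r / m)
      have h2 := Real.sin_sq_add_cos_sq (Real.pi * r / m)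
      have : 2 * Real.pi * (r : ℝ) / m = 2 * (Real.pi * r / m) := by ring
      rw [hμdef]
      simp only
      rw [this, h1]
      nlinarith [h2]
    have e1 : L ^ 3 * (2 * Real.pi * (r : ℝ) / L) ^ 4 = 16 * Real.pi ^ 4 * (r : ℝ) ^ 4 / L := by
      field_simp
      ring
    have e2 : (Real.pi / 2) ^ 4 * (h ^ 3 * ((m : ℝ) ^ 3 * (μ r * μ r) / h ^ 4))
        = Real.pi ^ 4 * ((m : ℝ) ^ 4 * Real.sin (Real.pi * r / m) ^ 4) / L := by
      rw [hμr, hh]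
      have hL' : L ≠ 0 := hL.ne'
      have hm' : (m : ℝ) ≠ 0 := hmR.ne'
      field_simp
      ring
    rw [e1, e2, div_le_div_iff_of_pos_right hL]
    nlinarith [hk, pow_pos Real.pi_pos 4]
  -- put both sides in comparable form and compare termwise
  calc L ^ 3 * ∑ r ∈ S, ∑ s ∈ S, ∑ t ∈ S,
        (2 * Real.pi * r / L) ^ 4 * Complex.normSq (c (r, s, t))
      = ∑ r ∈ S, ∑ s ∈ S, ∑ t ∈ S,
          (L ^ 3 * (2 * Real.pi * r / L) ^ 4) * Complex.normSq (c (r, s, t)) := by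
        simp only [Finset.mul_sum]
        exact Finset.sum_congr rfl fun r _ => Finset.sum_congr rfl fun s _ =>
          Finset.sum_congr rfl fun t _ => by ring
    _ ≤ ∑ r ∈ S, ∑ s ∈ S, ∑ t ∈ S,
          ((Real.pi / 2) ^ 4 * (h ^ 3 * ((m : ℝ) ^ 3 * (μ r * μ r) / h ^ 4)))
            * Complex.normSq (c (r, s, t)) := by
        refine Finset.sum_le_sum fun r hr => Finset.sum_le_sum fun s _ =>
          Finset.sum_le_sum fun t _ => ?_
        exact mul_le_mul_of_nonneg_right (base r hr) (Complex.normSq_nonneg _)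
    _ = (Real.pi / 2) ^ 4 * (h ^ 3 * (((m : ℝ) ^ 3 *
          ∑ r ∈ S, ∑ s ∈ S, ∑ t ∈ S, Complex.normSq (c (r, s, t)) * (μ r * μ r)) / h ^ 4)) := by
        simp only [Finset.mul_sum, Finset.sum_div]
        exact Finset.sum_congr rfl fun r _ => Finset.sum_congr rfl fun s _ =>
          Finset.sum_congr rfl fun t _ => by ring
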